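/- Let M be a contraction mapping 𝒰 ⊕ 𝒵∘ ⊕ 𝒱 into 𝒴 ⊕ 𝒵∘ ⊕ 𝒱 with block entries δ, γ₁, γ₂, β₁, β₂, α₁₁, α₁₂, α₂₁, α₂₂ as in the 3×3 partitioning. Write γ = [γ₁ γ₂] : 𝒵∘ ⊕ 𝒱 → 𝒴 and α = [[α₁₁, α₁₂],[α₂₁, α₂₂]] on 𝒵∘ ⊕ 𝒱. Then the following are equivalent: (a) the pair {γ, α} is observable, i.e. ⋂_{n≥0} ker(γ αⁿ) = {0}; (b) both (i) for every v ∈ 𝒱, if γ₂ α₂₂ⁿ v = 0 and α₁₂ α₂₂ⁿ v = 0 for all n ≥ 0 then v = 0, and (ii) for every z ∈ 𝒵∘ and v ∈ 𝒱, if γ αⁿ (z ⊕ v) = 0 for all n ≥ 0 then z = 0. -/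

import Mathlib

/- Statement 6 (Lemma on observability of partitioned systems): Let M be a contraction
mapping 𝒰 ⊕ 𝒵∘ ⊕ 𝒱 into 𝒴 ⊕ 𝒵∘ ⊕ 𝒱 with block entries δ, γ₁, γ₂, β₁, β₂, α₁₁, α₁₂,
α₂₁, α₂₂, and write γ = [γ₁ γ₂] and α = [[α₁₁,α₁₂],[α₂₁,α₂₂]] on 𝒵∘ ⊕ 𝒱.  Then {γ, α}
is observable if and only if (i) for every v ∈ 𝒱, if γ₂α₂₂ⁿv = 0 and α₁₂α₂₂ⁿv = 0 for
all n then v = 0, and (ii) for every z ∈ 𝒵∘, v ∈ 𝒱, if γαⁿ(z ⊕ v) = 0 for all n then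
z = 0. -/

open ContinuousLinearMap

noncomputable section

/-- row operator `[g₁ g₂] : A ⊕ B → C`. -/
noncomputable def rowC {A B C : Type*}
    [NormedAddCommGroup A] [InnerProductSpace ℂ A]
    [NormedAddCommGroup B] [InnerProductSpace ℂ B]
    [NormedAddCommGroup C] [InnerProductSpace ℂ C]
    (g₁ : A →L[ℂ] C) (g₂ : B →L[ℂ] C) : WithLp 2 (A × B) →L[ℂ] C :=
  (g₁.coprod g₂).comp (WithLp.prodContinuousLinearEquiv 2 ℂ A B).toContinuousLinearMap

/-- column operator `[b₁ ; b₂] : A → C ⊕ D`. -/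
noncomputable def colC {A C D : Type*}
    [NormedAddCommGroup A] [InnerProductSpace ℂ A]
    [NormedAddCommGroup C] [InnerProductSpace ℂ C]
    [NormedAddCommGroup D] [InnerProductSpace ℂ D]
    (b₁ : A →L[ℂ] C) (b₂ : A →L[ℂ] D) : A →L[ℂ] WithLp 2 (C × D) :=
  ((WithLp.prodContinuousLinearEquiv 2 ℂ C D).symm).toContinuousLinearMap.comp (b₁.prod b₂)

/-- 2×2 block operator `[[d, g],[b, a]] : A ⊕ B → C ⊕ D`. -/
noncomputable def block2 {A B C D : Type*}
    [NormedAddCommGroup A] [InnerProductSpace ℂ A]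
    [NormedAddCommGroup B] [InnerProductSpace ℂ B]
    [NormedAddCommGroup C] [InnerProductSpace ℂ C]
    [NormedAddCommGroup D] [InnerProductSpace ℂ D]
    (d : A →L[ℂ] C) (g : B →L[ℂ] C) (b : A →L[ℂ] D) (a : B →L[ℂ] D) :
    WithLp 2 (A × B) →L[ℂ] WithLp 2 (C × D) :=
  ((WithLp.prodContinuousLinearEquiv 2 ℂ C D).symm).toContinuousLinearMap.comp
    ((rowC d g).prod (rowC b a))

section Aux

variable {A B C D : Type*}
    [NormedAddCommGroup A] [InnerProductSpace ℂ A]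
    [NormedAddCommGroup B] [InnerProductSpace ℂ B]
    [NormedAddCommGroup C] [InnerProductSpace ℂ C]
    [NormedAddCommGroup D] [InnerProductSpace ℂ D]

lemma rowC_apply (g₁ : A →L[ℂ] C) (g₂ : B →L[ℂ] C) (ab : A × B) :
    rowC g₁ g₂ ((WithLp.equiv 2 (A × B)).symm ab) = g₁ ab.1 + g₂ ab.2 := rfl

lemma block2_apply (d : A →L[ℂ] C) (g : B →L[ℂ] C) (b : A →L[ℂ] D) (a : B →L[ℂ] D)
    (ab : A × B) :
    block2 d g b a ((WithLp.equiv 2 (A × B)).symm ab) =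
      (WithLp.equiv 2 (C × D)).symm (d ab.1 + g ab.2, b ab.1 + a ab.2) := rfl

end Aux

variable {𝒰 𝒴 𝒵 𝒱 : Type*}
  [NormedAddCommGroup 𝒰] [InnerProductSpace ℂ 𝒰] [CompleteSpace 𝒰]
  [NormedAddCommGroup 𝒴] [InnerProductSpace ℂ 𝒴] [CompleteSpace 𝒴]
  [NormedAddCommGroup 𝒵] [InnerProductSpace ℂ 𝒵] [CompleteSpace 𝒵]
  [NormedAddCommGroup 𝒱] [InnerProductSpace ℂ 𝒱] [CompleteSpace 𝒱]

theorem observability_of_partitioned_system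
    (δ : 𝒰 →L[ℂ] 𝒴) (γ₁ : 𝒵 →L[ℂ] 𝒴) (γ₂ : 𝒱 →L[ℂ] 𝒴)
    (β₁ : 𝒰 →L[ℂ] 𝒵) (β₂ : 𝒰 →L[ℂ] 𝒱)
    (α₁₁ : 𝒵 →L[ℂ] 𝒵) (α₁₂ : 𝒱 →L[ℂ] 𝒵) (α₂₁ : 𝒵 →L[ℂ] 𝒱) (α₂₂ : 𝒱 →L[ℂ] 𝒱)
    -- M : 𝒰 ⊕ (𝒵 ⊕ 𝒱) → 𝒴 ⊕ (𝒵 ⊕ 𝒱) is a contraction: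
    (hM : ‖block2 δ (rowC γ₁ γ₂) (colC β₁ β₂) (block2 α₁₁ α₁₂ α₂₁ α₂₂)‖ ≤ 1) :
    -- {γ, α} observable
    (∀ x : WithLp 2 (𝒵 × 𝒱),
        (∀ n : ℕ, (rowC γ₁ γ₂) (((block2 α₁₁ α₁₂ α₂₁ α₂₂) ^ n) x) = 0) → x = 0) ↔
      ((∀ v : 𝒱, (∀ n : ℕ, γ₂ ((α₂₂ ^ n) v) = 0 ∧ α₁₂ ((α₂₂ ^ n) v) = 0) → v = 0) ∧
        (∀ (zv : 𝒵 × 𝒱),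
          (∀ n : ℕ, (rowC γ₁ γ₂) (((block2 α₁₁ α₁₂ α₂₁ α₂₂) ^ n)
              ((WithLp.equiv 2 (𝒵 × 𝒱)).symm zv)) = 0) → zv.1 = 0)) := by
  set A := block2 α₁₁ α₁₂ α₂₁ α₂₂ with hA
  set Γ := rowC γ₁ γ₂ with hΓ
  set e := WithLp.equiv 2 (𝒵 × 𝒱) with he
  -- key computation: if the first components stay zero, powers act via α₂₂
  have key : ∀ (v : 𝒱), (∀ n : ℕ, α₁₂ ((α₂₂ ^ n) v) = 0) →
      ∀ n : ℕ, (A ^ n) (e.symm (0, v)) = e.symm (0, (α₂₂ ^ n) v) := by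
    intro v hv n
    induction n with
    | zero => simp
    | succ k ih =>
      rw [pow_succ', ContinuousLinearMap.mul_apply, ih, hA, block2_apply]
      simp [(by simpa using hv k : α₁₂ ((⇑α₂₂)^[k] v) = 0), pow_succ', ContinuousLinearMap.mul_apply, he]
  constructor
  · intro hObs
    refine ⟨?_, ?_⟩
    · intro v hv
      have h0 : e.symm (0, v) = 0 := by
        apply hObs
        intro n
        rw [key v (fun n => (hv n).2) n, hΓ, rowC_apply]
        simpa using (hv n).1
      have := congrArg e h0
      simp only [Equiv.apply_symm_apply, Equiv.apply_eq_iff_eq_symm_apply] at this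
      have : (0, v) = e 0 := this
      rw [show e (0 : WithLp 2 (𝒵 × 𝒱)) = (0 : 𝒵 × 𝒱) from rfl] at this
      exact congrArg Prod.snd this
    · intro zv hzv
      have h0 : e.symm zv = 0 := hObs _ hzv
      have : zv = e 0 := by rw [← h0]; exact (e.apply_symm_apply zv).symm
      rw [show e (0 : WithLp 2 (𝒵 × 𝒱)) = (0 : 𝒵 × 𝒱) from rfl] at this
      exact congrArg Prod.fst this
  · rintro ⟨h1, h2⟩ x hx
    have hxe : e.symm (e x) = x := e.symm_apply_apply x
    -- every iterate has vanishing first component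
    have hfst : ∀ k : ℕ, (e ((A ^ k) x)).1 = 0 := by
      intro k
      apply h2
      intro n
      rw [show e.symm (e ((A ^ k) x)) = (A ^ k) x from e.symm_apply_apply _]
      have : (A ^ n) ((A ^ k) x) = (A ^ (n + k)) x := by
        rw [pow_add, ContinuousLinearMap.mul_apply]
      rw [this]; exact hx (n + k)
    set v := (e x).2 with hv
    have hx0 : x = e.symm (0, v) := by
      rw [← hxe]
      congr 1
      have h0 := hfst 0
      simp only [pow_zero, ContinuousLinearMap.one_apply] at h0
      exact Prod.ext h0 rfl
    -- by induction, A^n x = e.symm (0, α₂₂^n v), and α₁₂ α₂₂^n v = 0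
    have main : ∀ n : ℕ, (A ^ n) x = e.symm (0, (α₂₂ ^ n) v) ∧ α₁₂ ((α₂₂ ^ n) v) = 0 := by
      intro n
      induction n with
      | zero =>
        refine ⟨by simpa using hx0, ?_⟩
        have h1' := hfst 1
        simp only [pow_one] at h1'
        rw [show x = e.symm (0, v) from hx0, hA, block2_apply] at h1'
        simpa [he] using h1'
      | succ k ih =>
        have hstep : (A ^ (k + 1)) x = e.symm (α₁₂ ((α₂₂ ^ k) v), (α₂₂ ^ (k + 1)) v) := by
          rw [pow_succ', ContinuousLinearMap.mul_apply, ih.1, hA, block2_apply]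
          simp [pow_succ', ContinuousLinearMap.mul_apply, he]
        have heq : (A ^ (k + 1)) x = e.symm (0, (α₂₂ ^ (k + 1)) v) := by
          rw [hstep, ih.2]
        refine ⟨heq, ?_⟩
        have h1' := hfst (k + 2)
        have : (A ^ (k + 2)) x = A ((A ^ (k + 1)) x) := by
          rw [pow_succ', ContinuousLinearMap.mul_apply]
        rw [this, heq, hA, block2_apply] at h1'
        simpa [pow_succ, ContinuousLinearMap.mul_apply, he] using h1'
    have hv0 : v = 0 := by
      apply h1
      intro n
      refine ⟨?_, (main n).2⟩
      have := hx n
      rw [(main n).1, hΓ, rowC_apply] at this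
      simpa using this
    rw [hx0, hv0]
    exact (WithLp.equiv 2 (𝒵 × 𝒱)).symm_apply_eq.mpr rfl

end
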